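/- Let p > 1 and let u : ℝⁿ → [−∞,∞] be a measurable function with u_− ∈ L^{p−1}_loc(ℝⁿ). Let {x_k} be a sequence in ℝⁿ converging to x ∈ ℝⁿ. Then there exists a subsequence {x_{k_j}} such that liminf_{j→∞} u(x_{k_j} + z) ≥ u(x + z) for almost every z ∈ ℝⁿ. -/

import Mathlib

open MeasureTheory Filter Set Metric Topology
open scoped ENNReal NNReal

noncomputable section

/-- Euclidean space ℝⁿ. -/
abbrev En (n : ℕ) : Type := EuclideanSpace ℝ (Fin n)

namespace FracP

variable (n : ℕ)

/-- `gp p t = |t|^{p-2} t`. -/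
def gp (p t : ℝ) : ℝ := |t| ^ (p - 2) * t

/-- The kernel class `Ker(Λ)`: symmetry, translation invariance, growth
`Λ⁻¹ ≤ K(x,y)|x-y|^{n+sp} ≤ Λ` off the diagonal, and continuity in `x` off the diagonal. -/
def IsKernel (s p Λ : ℝ) (K : En n → En n → ℝ) : Prop :=
  (∀ x y, K x y = K y x) ∧
  (∀ x y z : En n, x ≠ y → K (x + z) (y + z) = K x y) ∧
  (∀ x y : En n, x ≠ y →
    Λ⁻¹ ≤ K x y * dist x y ^ ((n : ℝ) + s * p) ∧
      K x y * dist x y ^ ((n : ℝ) + s * p) ≤ Λ) ∧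
  (∀ y : En n, ContinuousOn (fun x => K x y) {y}ᶜ)

/-- The weight `(1+|x|)^{-n-sp}` as an extended nonnegative real. -/
def tailWeight (s p : ℝ) (x : En n) : ℝ≥0∞ :=
  ENNReal.ofReal ((1 + ‖x‖) ^ (-(n : ℝ) - s * p))

/-- `f ∈ L^{p-1}_{sp}(ℝⁿ)`, the tail space. -/
def MemTail (s p : ℝ) (f : En n → ℝ) : Prop :=
  AEMeasurable f volume ∧
  ∫⁻ x : En n, ENNReal.ofReal (|f x| ^ (p - 1)) * tailWeight n s p x < ⊤

/-- The negative part of an `EReal`-valued function, as an `ℝ≥0∞`-valued function. -/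
def negE (u : En n → EReal) (x : En n) : ℝ≥0∞ :=
  if u x = ⊥ then ⊤ else ENNReal.ofReal ((-(u x)).toReal)

/-- `u₋ ∈ L^{p-1}_{sp}(ℝⁿ)` for an `EReal`-valued `u`. -/
def MemTailE (s p : ℝ) (u : En n → EReal) : Prop :=
  ∫⁻ x : En n, (negE n u x) ^ (p - 1) * tailWeight n s p x < ⊤

/-- The truncated integrals whose limit as `ε → 0⁺` is the principal value `L f (x)`. -/
def pvApprox (p : ℝ) (K : En n → En n → ℝ) (f : En n → ℝ) (x : En n) (ε : ℝ) : ℝ :=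
  ∫ y in {y : En n | ε ≤ dist x y}, gp p (f x - f y) * K x y

/-- The principal value `L f (x)` exists and equals `l ∈ [-∞,∞]`. -/
def HasPV (p : ℝ) (K : En n → En n → ℝ) (f : En n → ℝ) (x : En n) (l : EReal) : Prop :=
  Tendsto (fun ε : ℝ => (pvApprox n p K f x ε : EReal)) (𝓝[>] (0 : ℝ)) (𝓝 l)

/-- The principal value `L f (x)` exists, is finite, and equals `I : ℝ`. -/
def HasPVReal (p : ℝ) (K : En n → En n → ℝ) (f : En n → ℝ) (x : En n) (I : ℝ) : Prop :=
  Tendsto (fun ε : ℝ => pvApprox n p K f x ε) (𝓝[>] (0 : ℝ)) (𝓝 I)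

/-- Truncated integrals over `B_ε(x) \ B_δ(x)` (for principal values over a ball). -/
def pvBallApprox (p : ℝ) (K : En n → En n → ℝ) (f : En n → ℝ) (x : En n) (ε δ : ℝ) : ℝ :=
  ∫ y in ball x ε \ ball x δ, gp p (f x - f y) * K x y

/-- Distance to the critical set of `φ` in `D`: `d_φ(x) = dist(x, N_φ)`. -/
def dCrit (φ : En n → ℝ) (D : Set (En n)) (x : En n) : ℝ :=
  Metric.infDist x {y ∈ D | fderiv ℝ φ y = 0}

/-- The class `C²_β(D)`. -/
def MemC2Beta (β : ℝ) (D : Set (En n)) (φ : En n → ℝ) : Prop :=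
  ContDiffOn ℝ 2 φ D ∧
  ∃ C : ℝ, ∀ x ∈ D,
    (min (dCrit n φ D x) 1) ^ (β - 1) / ‖fderiv ℝ φ x‖ +
      ‖fderiv ℝ (fderiv ℝ φ) x‖ / (dCrit n φ D x) ^ (β - 2) ≤ C

/-- `x₀` is an isolated critical point of `φ`. -/
def IsolatedCritPt (φ : En n → ℝ) (x₀ : En n) : Prop :=
  fderiv ℝ φ x₀ = 0 ∧ ∃ ρ > 0, ∀ y ∈ ball x₀ ρ, y ≠ x₀ → fderiv ℝ φ y ≠ 0

/-- Conditions (a)/(b) on a test function `φ` in the definition of viscosity supersolutions. -/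
def TestAdmissible (s p : ℝ) (φ : En n → ℝ) (x₀ : En n) (r : ℝ) : Prop :=
  (2 / (2 - s) < p ∨ fderiv ℝ φ x₀ ≠ 0) ∨
  (p ≤ 2 / (2 - s) ∧ IsolatedCritPt n φ x₀ ∧
    ∃ β : ℝ, s * p / (p - 1) < β ∧ MemC2Beta n β (ball x₀ r) φ)

-- The glued test function `φ_r`: `φ` in `B_r(x₀)` and `u` outside.
open Classical in
def glue (u : En n → EReal) (φ : En n → ℝ) (x₀ : En n) (r : ℝ) : En n → ℝ :=
  fun y => if y ∈ ball x₀ r then φ y else (u y).toReal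

/-- `u` is an `(s,p)`-viscosity supersolution in `Ω`. -/
def IsViscositySupersol (s p : ℝ) (K : En n → En n → ℝ) (Ω : Set (En n))
    (u : En n → EReal) : Prop :=
  Measurable u ∧
  (∀ᵐ x : En n, u x < ⊤) ∧
  (∀ x ∈ Ω, ⊥ < u x) ∧
  LowerSemicontinuousOn u Ω ∧
  MemTailE n s p u ∧
  ∀ (x₀ : En n) (r : ℝ) (φ : En n → ℝ), 0 < r → ball x₀ r ⊆ Ω →
    ContDiffOn ℝ 2 φ (ball x₀ r) →
    ((φ x₀ : EReal) = u x₀) → (∀ x ∈ ball x₀ r, (φ x : EReal) ≤ u x) →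
    TestAdmissible n s p φ x₀ r →
    ∃ l : EReal, HasPV n p K (glue n u φ x₀ r) x₀ l ∧ 0 ≤ l

/-- `v` is an `(s,p)`-viscosity subsolution in `Ω`. -/
def IsViscositySubsol (s p : ℝ) (K : En n → En n → ℝ) (Ω : Set (En n))
    (v : En n → EReal) : Prop :=
  IsViscositySupersol n s p K Ω (fun x => -(v x))

/-- `u ∈ W^{s,p}_loc(Ω)`. -/
def MemWspLoc (s p : ℝ) (Ω : Set (En n)) (u : En n → ℝ) : Prop :=
  ∀ D : Set (En n), IsOpen D → IsCompact (closure D) → closure D ⊆ Ω →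
    (∫⁻ x in D, ENNReal.ofReal (|u x| ^ p) < ⊤) ∧
    (∫⁻ x in D, ∫⁻ y in D,
      ENNReal.ofReal (|u x - u y| ^ p * dist x y ^ (-(n : ℝ) - s * p)) < ⊤)

/-- `φ ∈ C_0^∞(D)`. -/
def IsTestFn (D : Set (En n)) (φ : En n → ℝ) : Prop :=
  ContDiff ℝ (⊤ : ℕ∞) φ ∧ HasCompactSupport φ ∧ tsupport φ ⊆ D

/-- The weak formulation energy pairing. -/
def weakEnergy (p : ℝ) (K : En n → En n → ℝ) (u φ : En n → ℝ) : ℝ :=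
  ∫ x : En n, ∫ y : En n, gp p (u x - u y) * (φ x - φ y) * K x y

/-- `u` is a weak solution of `Lu = 0` in `D`. -/
def IsWeakSolution (s p : ℝ) (K : En n → En n → ℝ) (D : Set (En n)) (u : En n → ℝ) : Prop :=
  MemWspLoc n s p D u ∧ MemTail n s p u ∧
  ∀ φ : En n → ℝ, IsTestFn n D φ → weakEnergy n p K u φ = 0

/-- `u` is a weak supersolution of `Lu = 0` in `D`. -/
def IsWeakSupersol (s p : ℝ) (K : En n → En n → ℝ) (D : Set (En n)) (u : En n → ℝ) : Prop :=
  MemWspLoc n s p D u ∧ MemTail n s p u ∧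
  ∀ φ : En n → ℝ, IsTestFn n D φ → (∀ x, 0 ≤ φ x) → 0 ≤ weakEnergy n p K u φ

/-- `u` is `(s,p)`-superharmonic in `Ω`. -/
def IsSuperharmonic (s p : ℝ) (K : En n → En n → ℝ) (Ω : Set (En n))
    (u : En n → EReal) : Prop :=
  Measurable u ∧
  (∀ᵐ x : En n, u x < ⊤) ∧
  (∀ x ∈ Ω, ⊥ < u x) ∧
  LowerSemicontinuousOn u Ω ∧
  MemTailE n s p u ∧
  ∀ D : Set (En n), IsOpen D → IsCompact (closure D) → closure D ⊆ Ω →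
    ∀ v : En n → ℝ, ContinuousOn v (closure D) → IsWeakSolution n s p K D v →
      (∀ x ∈ frontier D, (v x : EReal) ≤ u x) →
      (∀ᵐ x : En n, x ∉ D → (v x : EReal) ≤ u x) →
      ∀ x ∈ D, (v x : EReal) ≤ u x

/-- `essliminf_{y → x} u(y)`, realized as `sup_{r>0} essinf_{B_r(x)} u`. -/
def essLiminfAt (u : En n → EReal) (x : En n) : EReal :=
  ⨆ r ∈ Ioi (0 : ℝ), essInf u (volume.restrict (ball x r))

end FracP

namespace FracP

/-- A bounded strictly monotone "compactification" map `EReal → ℝ`. -/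
private def Phi : EReal → ℝ := fun e =>
  if e = ⊥ then -2 else if e = ⊤ then 2 else Real.arctan e.toReal

private lemma Phi_bot : Phi ⊥ = -2 := rfl

private lemma Phi_top : Phi ⊤ = 2 := rfl

private lemma Phi_coe (t : ℝ) : Phi (t : EReal) = Real.arctan t := by
  simp [Phi, EReal.coe_ne_bot, EReal.coe_ne_top]

private lemma arctan_lt_two (t : ℝ) : Real.arctan t < 2 :=
  (Real.arctan_lt_pi_div_two t).trans_le (by linarith [Real.pi_le_four])

private lemma neg_two_lt_arctan (t : ℝ) : -2 < Real.arctan t := by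
  have := Real.neg_pi_div_two_lt_arctan t
  have := Real.pi_le_four
  linarith

private lemma Phi_abs_le (e : EReal) : |Phi e| ≤ 2 := by
  induction e using EReal.rec with
  | bot => simp [Phi_bot]
  | coe t =>
      rw [Phi_coe, abs_le]
      exact ⟨(neg_two_lt_arctan t).le, (arctan_lt_two t).le⟩
  | top => simp [Phi_top]

private lemma Phi_strictMono : StrictMono Phi := by
  intro a b hab
  induction a using EReal.rec with
  | bot =>
      induction b using EReal.rec with
      | bot => exact absurd hab (lt_irrefl _)
      | coe t => rw [Phi_bot, Phi_coe]; exact neg_two_lt_arctan t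
      | top => rw [Phi_bot, Phi_top]; norm_num
  | coe s =>
      induction b using EReal.rec with
      | bot => exact absurd hab (by simp)
      | coe t =>
          rw [Phi_coe, Phi_coe]
          exact Real.arctan_strictMono (EReal.coe_lt_coe_iff.mp hab)
      | top => rw [Phi_coe, Phi_top]; exact arctan_lt_two s
  | top => exact absurd hab (by simp)

private lemma Phi_measurable : Measurable Phi := by
  apply Measurable.ite (MeasurableSet.singleton ⊥) measurable_const
  apply Measurable.ite (MeasurableSet.singleton ⊤) measurable_const
  exact Real.continuous_arctan.measurable.comp measurable_ereal_toReal

/-- If `Phi (a j) → Phi b`, then `b ≤ liminf a`. -/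
private lemma le_liminf_of_phi_tendsto {a : ℕ → EReal} {b : EReal}
    (h : Tendsto (fun j => Phi (a j)) atTop (𝓝 (Phi b))) :
    b ≤ Filter.liminf a atTop := by
  refine le_of_forall_lt_imp_le_of_dense fun c hc => ?_
  have h1 : ∀ᶠ j in atTop, Phi c < Phi (a j) :=
    h.eventually (eventually_gt_nhds (Phi_strictMono hc))
  have h2 : ∀ᶠ j in atTop, c ≤ a j :=
    h1.mono fun j hj => (Phi_strictMono.lt_iff_lt.mp hj).le
  calc c = Filter.liminf (fun _ : ℕ => c) atTop := (Filter.liminf_const c).symm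
    _ ≤ Filter.liminf a atTop := Filter.liminf_le_liminf h2

/- STATEMENT 14 -/
theorem stmt14 (n : ℕ) (hn : 1 ≤ n) (p : ℝ) (hp : 1 < p)
    (u : En n → EReal) (humeas : Measurable u)
    (huloc : ∀ C : Set (En n), IsCompact C → ∫⁻ z in C, (negE n u z) ^ (p - 1) < ⊤)
    (x : En n) (xk : ℕ → En n) (hconv : Tendsto xk atTop (𝓝 x)) :
    ∃ k : ℕ → ℕ, StrictMono k ∧
      ∀ᵐ z : En n, u (x + z) ≤ Filter.liminf (fun j => u (xk (k j) + z)) atTop := by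
  classical
  -- weight function
  set w : En n → ℝ := fun z => (1 + ‖z‖) ^ (-(n + 1 : ℝ)) with hw
  have hwpos : ∀ z, 0 < w z := fun z => Real.rpow_pos_of_pos (by positivity) _
  have hwcont : Continuous w :=
    Continuous.rpow_const (continuous_const.add continuous_norm)
      fun z => Or.inl (by positivity)
  have hwint : Integrable w := by
    have hfr : ((Module.finrank ℝ (En n) : ℝ)) < (n + 1 : ℝ) := by
      simp [finrank_euclideanSpace]
    show Integrable (fun z : En n => (1 + ‖z‖) ^ (-(n + 1 : ℝ))) volume
    exact integrable_one_add_norm hfr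
  -- the bounded integrable function F
  set F : En n → ℝ := fun z => Phi (u z) * w z with hF
  have hFmeas : Measurable F := (Phi_measurable.comp humeas).mul hwcont.measurable
  have hFint : Integrable F := by
    refine (hwint.const_mul 2).mono' hFmeas.aestronglyMeasurable (ae_of_all _ fun z => ?_)
    have h1 : |Phi (u z)| ≤ 2 := Phi_abs_le _
    have h2 : 0 ≤ w z := (hwpos z).le
    calc ‖F z‖ = |Phi (u z)| * w z := by
          rw [Real.norm_eq_abs, abs_mul, abs_of_nonneg h2]
      _ ≤ 2 * w z := by nlinarith
  set FLp : Lp ℝ 1 (volume : Measure (En n)) :=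
    (memLp_one_iff_integrable.mpr hFint).toLp F with hFLp
  -- translations
  set T : C(En n, C(En n, En n)) :=
    ContinuousMap.curry ⟨fun q : En n × En n => q.1 + q.2, by continuity⟩ with hT
  have hTapp : ∀ a z : En n, T a z = a + z := fun a z => rfl
  have hTmp : ∀ a : En n, MeasurePreserving (T a) volume volume := by
    intro a
    have : MeasurePreserving (fun z : En n => a + z) volume volume :=
      measurePreserving_add_left volume a
    exact this
  set G : ℕ → Lp ℝ 1 (volume : Measure (En n)) :=
    fun k => Lp.compMeasurePreserving (T (xk k)) (hTmp _) FLp with hG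
  set Glim : Lp ℝ 1 (volume : Measure (En n)) :=
    Lp.compMeasurePreserving (T x) (hTmp x) FLp with hGlim
  have hTcont : Tendsto (fun k => T (xk k)) atTop (𝓝 (T x)) :=
    (T.continuous.tendsto x).comp hconv
  have hGtend : Tendsto G atTop (𝓝 Glim) :=
    Filter.Tendsto.compMeasurePreservingLp tendsto_const_nhds hTcont
      (fun k => hTmp _) (hTmp x) ENNReal.one_ne_top
  have hInM : TendstoInMeasure volume (fun k => (G k : En n → ℝ)) atTop Glim :=
    tendstoInMeasure_of_tendsto_Lp hGtend
  obtain ⟨ns, hns, hae⟩ := hInM.exists_seq_tendsto_ae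
  refine ⟨ns, hns, ?_⟩
  -- identify the Lp functions a.e.
  have hGk : ∀ k, (G k : En n → ℝ) =ᵐ[volume] fun z => F (xk k + z) := by
    intro k
    refine (Lp.coeFn_compMeasurePreserving FLp (hTmp (xk k))).trans ?_
    have := (hTmp (xk k)).quasiMeasurePreserving.ae_eq_comp
      ((memLp_one_iff_integrable.mpr hFint).coeFn_toLp)
    exact this
  have hGlim' : (Glim : En n → ℝ) =ᵐ[volume] fun z => F (x + z) := by
    refine (Lp.coeFn_compMeasurePreserving FLp (hTmp x)).trans ?_
    exact (hTmp x).quasiMeasurePreserving.ae_eq_comp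
      ((memLp_one_iff_integrable.mpr hFint).coeFn_toLp)
  have hsub : Tendsto (fun j => xk (ns j)) atTop (𝓝 x) :=
    hconv.comp hns.tendsto_atTop
  filter_upwards [hae, MeasureTheory.ae_all_iff.mpr fun j => hGk (ns j), hGlim']
    with z h1 h2 h3
  -- pointwise: F (xk (ns j) + z) → F (x + z)
  have hFz : Tendsto (fun j => F (xk (ns j) + z)) atTop (𝓝 (F (x + z))) := by
    have : (fun j => F (xk (ns j) + z)) = fun j => (G (ns j) : En n → ℝ) z := by
      funext j; exact (h2 j).symm
    rw [this, ← h3]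
    exact h1
  have hpt : Tendsto (fun j => xk (ns j) + z) atTop (𝓝 (x + z)) :=
    hsub.add_const z
  have hwz : Tendsto (fun j => w (xk (ns j) + z)) atTop (𝓝 (w (x + z))) :=
    (hwcont.tendsto _).comp hpt
  have hPhi : Tendsto (fun j => Phi (u (xk (ns j) + z))) atTop (𝓝 (Phi (u (x + z)))) := by
    have hdiv := hFz.div hwz (hwpos (x + z)).ne'
    have heq : ∀ a : En n, F a / w a = Phi (u a) := fun a =>
      mul_div_cancel_right₀ _ (hwpos a).ne'
    rw [heq (x + z)] at hdiv
    exact hdiv.congr fun j => heq _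
  exact le_liminf_of_phi_tendsto hPhi


end FracP
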